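/- Let t₀ ∈ ℝ, T_p > 0, r a positive integer, 𝒯(t) = (T_p/(T_p + t₀ − t))^r on [t₀, t₀ + T_p), ρ₀ > 0, and ρ = ρ₀ + r/T_p. Suppose x : [t₀, t₀ + T_p) → ℝ is differentiable with ẋ(t) = −ρ 𝒯(t) x(t). Then for every t ∈ [t₀, t₀ + T_p), |x(t)| ≤ 𝒯(t)^{−1} · exp(−ρ₀ ∫_{t₀}^{t} 𝒯(τ) dτ) · |x(t₀)|. -/

import Mathlib

/-- The time-scaling function `𝒯(t) = (T_p / (T_p + t₀ - t))^r`. -/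
noncomputable def Tscale (t₀ Tp : ℝ) (r : ℕ) (t : ℝ) : ℝ := (Tp / (Tp + t₀ - t)) ^ r

/-- eq. (17) of the paper: the closed-loop single integrator
with gain `ρ = ρ₀ + r/T_p` satisfies
`|x(t)| ≤ 𝒯(t)⁻¹ exp(-ρ₀ ∫_{t₀}^{t} 𝒯) |x(t₀)|`. -/
theorem single_integrator_solution_estimate
    (t₀ Tp : ℝ) (hTp : 0 < Tp) (r : ℕ) (hr : 0 < r)
    (ρ₀ ρ : ℝ) (hρ₀ : 0 < ρ₀) (hρ : ρ = ρ₀ + (r : ℝ) / Tp)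
    (x : ℝ → ℝ)
    (hx : ∀ t ∈ Set.Ico t₀ (t₀ + Tp),
      HasDerivAt x (-(ρ * Tscale t₀ Tp r t) * x t) t) :
    ∀ t ∈ Set.Ico t₀ (t₀ + Tp),
      |x t| ≤ (Tscale t₀ Tp r t)⁻¹
        * Real.exp (-ρ₀ * ∫ τ in t₀..t, Tscale t₀ Tp r τ) * |x t₀| := by
  intro t ht
  obtain ⟨ht₀, htb⟩ := ht
  set b := t₀ + Tp with hb
  set 𝒯 : ℝ → ℝ := Tscale t₀ Tp r with h𝒯
  set F : ℝ → ℝ := fun u => ∫ τ in t₀..u, 𝒯 τ with hF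
  -- denominator positivity
  have hden : ∀ s ∈ Set.Iio b, 0 < Tp + t₀ - s := fun s hs => by
    simp only [Set.mem_Iio, hb] at hs ⊢; linarith
  have hcont : ContinuousOn 𝒯 (Set.Iio b) := by
    apply ContinuousOn.pow
    exact continuousOn_const.div (by fun_prop) fun s hs => (hden s hs).ne'
  -- FTC derivative of F
  have hFderiv : ∀ s ∈ Set.Ico t₀ b, HasDerivAt F (𝒯 s) s := by
    intro s hs
    apply intervalIntegral.integral_hasDerivAt_right
    · apply ContinuousOn.intervalIntegrable
      apply hcont.mono
      rw [Set.uIcc_of_le hs.1]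
      exact fun y hy => lt_of_le_of_lt hy.2 hs.2
    · exact hcont.stronglyMeasurableAtFilter isOpen_Iio s hs.2
    · exact hcont.continuousAt (isOpen_Iio.mem_nhds hs.2)
  -- first part: exact solution formula x(s) * exp(ρ F s) = x t₀ on [t₀, t]
  have hsol : x t * Real.exp (ρ * F t) = x t₀ := by
    have key : ∀ s ∈ Set.Icc t₀ t,
        x s * Real.exp (ρ * F s) = x t₀ * Real.exp (ρ * F t₀) := by
      apply constant_of_has_deriv_right_zero
      · intro s hs
        have hs' : s ∈ Set.Ico t₀ b := ⟨hs.1, lt_of_le_of_lt hs.2 htb⟩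
        exact (((hx s hs').mul
          (((hFderiv s hs').const_mul ρ).exp)).continuousAt).continuousWithinAt
      · intro s hs
        have hs' : s ∈ Set.Ico t₀ b := ⟨hs.1, lt_of_le_of_lt hs.2.le htb⟩
        have hd := (hx s hs').mul (((hFderiv s hs').const_mul ρ).exp)
        have heq : (-(ρ * 𝒯 s) * x s) * Real.exp (ρ * F s)
            + x s * (Real.exp (ρ * F s) * (ρ * 𝒯 s)) = 0 := by ring
        rw [heq] at hd
        exact hd.hasDerivWithinAt
    have h1 := key t ⟨ht₀, le_refl t⟩
    have h2 : F t₀ = 0 := intervalIntegral.integral_same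
    rw [h2] at h1; simpa using h1
  -- second part: ψ s = (Tp+t₀-s)^r / Tp^r * exp((r/Tp) * F s) is monotone on [t₀, t]
  set ψ : ℝ → ℝ := fun s => (Tp + t₀ - s) ^ r / Tp ^ r * Real.exp ((r / Tp) * F s) with hψ
  have hψderiv : ∀ s ∈ Set.Ico t₀ b,
      HasDerivAt ψ ((r : ℝ) / Tp ^ r * (Tp ^ (r - 1) - (Tp + t₀ - s) ^ (r - 1))
        * Real.exp ((r / Tp) * F s)) s := by
    intro s hs
    have hu : HasDerivAt (fun u : ℝ => Tp + t₀ - u) (-1) s := by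
      simpa using (hasDerivAt_id s).const_sub (Tp + t₀)
    have hupow : HasDerivAt (fun u : ℝ => (Tp + t₀ - u) ^ r / Tp ^ r)
        ((r : ℕ) * (Tp + t₀ - s) ^ (r - 1) * (-1) / Tp ^ r) s := (hu.pow r).div_const _
    have hexp : HasDerivAt (fun u => Real.exp ((r / Tp) * F u))
        (Real.exp ((r / Tp) * F s) * ((r / Tp) * 𝒯 s)) s :=
      (((hFderiv s hs).const_mul ((r : ℝ) / Tp)).exp)
    have hd := hupow.mul hexp
    refine HasDerivAt.congr_deriv hd ?_
    symm
    have hs0 : (0:ℝ) < Tp + t₀ - s := hden s hs.2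
    have h𝒯s : 𝒯 s = Tp ^ r / (Tp + t₀ - s) ^ r := by
      rw [h𝒯, Tscale, div_pow]
    obtain ⟨m, rfl⟩ : ∃ m, r = m + 1 := ⟨r - 1, (Nat.succ_pred_eq_of_pos hr).symm⟩
    simp only [Nat.add_sub_cancel] at *
    rw [h𝒯s]
    have hu0 : (Tp + t₀ - s) ≠ 0 := hs0.ne'
    field_simp
    ring
  have hψmono : ψ t₀ ≤ ψ t := by
    have hmono : MonotoneOn ψ (Set.Icc t₀ t) := by
      apply monotoneOn_of_deriv_nonneg (convex_Icc t₀ t)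
      · intro s hs
        have hs' : s ∈ Set.Ico t₀ b := ⟨hs.1, lt_of_le_of_lt hs.2 htb⟩
        exact ((hψderiv s hs').continuousAt).continuousWithinAt
      · intro s hs
        rw [interior_Icc] at hs
        have hs' : s ∈ Set.Ico t₀ b := ⟨hs.1.le, lt_trans hs.2 htb⟩
        exact ((hψderiv s hs').differentiableAt).differentiableWithinAt
      · intro s hs
        rw [interior_Icc] at hs
        have hs' : s ∈ Set.Ico t₀ b := ⟨hs.1.le, lt_trans hs.2 htb⟩
        rw [(hψderiv s hs').deriv]
        have hs0 : (0:ℝ) < Tp + t₀ - s := hden s hs'.2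
        have hle : Tp + t₀ - s ≤ Tp := by linarith [hs.1]
        have hpow : (Tp + t₀ - s) ^ (r - 1) ≤ Tp ^ (r - 1) := pow_le_pow_left₀ hs0.le hle _
        have h1 : (0:ℝ) ≤ (r : ℝ) / Tp ^ r := by positivity
        exact mul_nonneg (mul_nonneg h1 (by linarith)) (Real.exp_nonneg _)
    exact hmono (Set.left_mem_Icc.2 ht₀) (Set.right_mem_Icc.2 ht₀) ht₀
  have hψt0 : ψ t₀ = 1 := by
    have h2 : F t₀ = 0 := intervalIntegral.integral_same
    simp [hψ, h2, div_self (pow_ne_zero r hTp.ne')]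
  have hinv : (𝒯 t)⁻¹ = (Tp + t₀ - t) ^ r / Tp ^ r := by
    rw [h𝒯, Tscale, div_pow, inv_div]
  have hψt : 1 ≤ (𝒯 t)⁻¹ * Real.exp ((r / Tp) * F t) := by
    rw [hinv]; rw [hψt0] at hψmono; exact hψmono
  have h2 : Real.exp (-((r / Tp : ℝ) * F t)) ≤ (𝒯 t)⁻¹ := by
    have h3 := mul_le_mul_of_nonneg_right hψt (Real.exp_nonneg (-((r / Tp : ℝ) * F t)))
    rw [one_mul, mul_assoc, ← Real.exp_add, add_neg_cancel, Real.exp_zero, mul_one] at h3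
    exact h3
  have hxt : |x t| = Real.exp (-(ρ * F t)) * |x t₀| := by
    have h4 := congrArg abs hsol
    rw [abs_mul, abs_of_pos (Real.exp_pos _)] at h4
    rw [← h4, Real.exp_neg]
    field_simp
  rw [hxt]
  apply mul_le_mul_of_nonneg_right _ (abs_nonneg _)
  calc Real.exp (-(ρ * F t))
      = Real.exp (-ρ₀ * F t) * Real.exp (-((r / Tp : ℝ) * F t)) := by
        rw [← Real.exp_add]; congr 1; rw [hρ]; ring
    _ ≤ Real.exp (-ρ₀ * F t) * (𝒯 t)⁻¹ :=
        mul_le_mul_of_nonneg_left h2 (Real.exp_nonneg _)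
    _ = (𝒯 t)⁻¹ * Real.exp (-ρ₀ * F t) := mul_comm _ _
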